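/- The number of Fibonacci sets of rank N equals the N-th Fibonacci number F(N+1) (with F(1)=F(2)=1), i.e. |YFS_0|=1, |YFS_1|=1, and |YFS_N| = |YFS_{N-1}| + |YFS_{N-2}| for N ≥ 2. -/

import Mathlib

/-- `S` is a Fibonacci set of rank `N`: a subset of `{1,…,N}` whose cardinality has the
same parity as `N`, and whose `ℓ`-th smallest element (1-indexed) has the same parity as `ℓ`. -/
def IsFibSet (N : ℕ) (S : Finset ℕ) : Prop :=
  S ⊆ Finset.Icc 1 N ∧ S.card % 2 = N % 2 ∧
    ∀ i < S.card, ((S.sort (· ≤ ·)).getD i 0) % 2 = (i + 1) % 2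

open Classical in
/-- The number of Fibonacci sets of rank `N`. -/
noncomputable def numFibSets (N : ℕ) : ℕ :=
  (((Finset.Icc 1 N).powerset).filter (IsFibSet N)).card

lemma sort_insert_max {a : ℕ} {s : Finset ℕ} (h : ∀ b ∈ s, b < a) :
    (insert a s).sort (· ≤ ·) = s.sort (· ≤ ·) ++ [a] := by
  have ha : a ∉ s := fun hm => lt_irrefl a (h a hm)
  apply List.Perm.eq_of_pairwise' (r := (· ≤ ·))
  · exact Finset.pairwise_sort _ _
  · rw [List.pairwise_append]
    refine ⟨Finset.pairwise_sort _ _, List.pairwise_singleton _ a, ?_⟩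
    intro x hx y hy
    simp only [List.mem_singleton] at hy
    subst hy
    exact le_of_lt (h x ((Finset.mem_sort _).mp hx))
  · rw [← Multiset.coe_eq_coe]
    push_cast [Finset.sort_eq]
    rw [Finset.insert_val, Multiset.ndinsert_of_notMem ha]
    rw [← Finset.sort_eq s (· ≤ ·), Multiset.cons_coe, Multiset.coe_eq_coe]
    exact (List.perm_append_singleton a _).symm

lemma isFibSet_insert_iff {N : ℕ} {S : Finset ℕ} (hS : S ⊆ Finset.Icc 1 N) :
    IsFibSet (N + 1) (insert (N + 1) S) ↔ IsFibSet N S := by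
  have hlt : ∀ b ∈ S, b < N + 1 := by
    intro b hb
    have := (Finset.mem_Icc.mp (hS hb)).2
    omega
  have hnm : N + 1 ∉ S := fun hm => lt_irrefl _ (hlt _ hm)
  have hsort : (insert (N + 1) S).sort (· ≤ ·) = S.sort (· ≤ ·) ++ [N + 1] :=
    sort_insert_max hlt
  have hcard : (insert (N + 1) S).card = S.card + 1 := Finset.card_insert_of_notMem hnm
  have hlen : (S.sort (· ≤ ·)).length = S.card := Finset.length_sort _
  constructor
  · rintro ⟨h1, h2, h3⟩
    refine ⟨hS, by omega, ?_⟩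
    intro i hi
    have := h3 i (by omega)
    rwa [hsort, List.getD_append _ _ _ _ (by omega)] at this
  · rintro ⟨h1, h2, h3⟩
    refine ⟨?_, by omega, ?_⟩
    · intro x hx
      rcases Finset.mem_insert.mp hx with rfl | hx
      · simp
      · have := Finset.mem_Icc.mp (h1 hx); exact Finset.mem_Icc.mpr ⟨this.1, by omega⟩
    · intro i hi
      rw [hcard] at hi
      rw [hsort]
      rcases Nat.lt_or_ge i S.card with h | h
      · rw [List.getD_append _ _ _ _ (by omega)]
        exact h3 i h
      · have hieq : i = S.card := by omega
        rw [List.getD_append_right _ _ _ _ (by omega)]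
        subst hieq
        simp only [hlen, Nat.sub_self]
        simpa using by omega

lemma isFibSet_skip_iff {N : ℕ} {S : Finset ℕ} (hS : S ⊆ Finset.Icc 1 N) :
    IsFibSet (N + 2) S ↔ IsFibSet N S := by
  unfold IsFibSet
  have : (N + 2) % 2 = N % 2 := by omega
  rw [this]
  constructor
  · rintro ⟨_, h2, h3⟩; exact ⟨hS, h2, h3⟩
  · rintro ⟨h1, h2, h3⟩
    refine ⟨fun x hx => ?_, h2, h3⟩
    have := Finset.mem_Icc.mp (h1 hx); exact Finset.mem_Icc.mpr ⟨this.1, by omega⟩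

lemma not_mem_succ_of_isFibSet {N : ℕ} {S : Finset ℕ}
    (h : IsFibSet (N + 2) S) (hN : N + 2 ∉ S) : N + 1 ∉ S := by
  intro hmem
  obtain ⟨h1, h2, h3⟩ := h
  have hne : S.Nonempty := ⟨N + 1, hmem⟩
  have hpos : 0 < S.card := Finset.card_pos.mpr hne
  have hmax : S.max' hne = N + 1 := by
    apply le_antisymm
    · apply Finset.max'_le
      intro y hy
      have := (Finset.mem_Icc.mp (h1 hy)).2
      have : y ≠ N + 2 := fun he => hN (he ▸ hy)
      omega
    · exact Finset.le_max' _ _ hmem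
  have hlen : (S.sort (· ≤ ·)).length = S.card := Finset.length_sort _
  have hget := h3 (S.card - 1) (by omega)
  rw [List.getD_eq_getElem _ _ (by omega)] at hget
  have : (S.sort (· ≤ ·))[(S.sort (· ≤ ·)).length - 1]'(by omega) = S.max' hne :=
    Finset.sorted_last_eq_max'_aux S (by omega) hne
  simp only [hlen] at this
  rw [this, hmax] at hget
  omega

open Classical in
lemma numFibSets_rec (N : ℕ) :
    numFibSets (N + 2) = numFibSets (N + 1) + numFibSets N := by
  classical
  have hmem : ∀ (M : ℕ) (S : Finset ℕ),
      S ∈ ((Finset.Icc 1 M).powerset).filter (IsFibSet M) ↔ IsFibSet M S := by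
    intro M S
    simp only [Finset.mem_filter, Finset.mem_powerset]
    exact ⟨fun h => h.2, fun h => ⟨h.1, h⟩⟩
  have hsplit : ((Finset.Icc 1 (N + 2)).powerset).filter (IsFibSet (N + 2)) =
      (((Finset.Icc 1 (N + 1)).powerset).filter (IsFibSet (N + 1))).image
        (insert (N + 2)) ∪ ((Finset.Icc 1 N).powerset).filter (IsFibSet N) := by
    ext S
    rw [hmem, Finset.mem_union, Finset.mem_image, hmem]
    constructor
    · intro h
      by_cases hin : N + 2 ∈ S
      · left
        refine ⟨S.erase (N + 2), ?_, ?_⟩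
        · rw [hmem]
          have hsub : S.erase (N + 2) ⊆ Finset.Icc 1 (N + 1) := by
            intro x hx
            have hx' := Finset.mem_erase.mp hx
            have := Finset.mem_Icc.mp (h.1 hx'.2)
            exact Finset.mem_Icc.mpr ⟨this.1, by omega⟩
          have := (isFibSet_insert_iff hsub).mp ?_
          · exact this
          · rwa [Finset.insert_erase hin]
        · exact Finset.insert_erase hin
      · right
        have hnot1 : N + 1 ∉ S := not_mem_succ_of_isFibSet h hin
        have hsub : S ⊆ Finset.Icc 1 N := by
          intro x hx
          have := Finset.mem_Icc.mp (h.1 hx)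
          have h1 : x ≠ N + 2 := fun he => hin (he ▸ hx)
          have h2 : x ≠ N + 1 := fun he => hnot1 (he ▸ hx)
          exact Finset.mem_Icc.mpr ⟨this.1, by omega⟩
        exact (isFibSet_skip_iff hsub).mp h
    · rintro (⟨T, hT, rfl⟩ | h)
      · rw [hmem] at hT
        exact (isFibSet_insert_iff hT.1).mpr hT
      · exact (isFibSet_skip_iff h.1).mpr h
  unfold numFibSets
  rw [hsplit]
  rw [Finset.card_union_of_disjoint, Finset.card_image_of_injOn]
  · intro S hS T hT hST
    rw [Finset.mem_coe, hmem] at hS hT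
    have hSn : N + 2 ∉ S := fun hm => by
      have := (Finset.mem_Icc.mp (hS.1 hm)).2; omega
    have hTn : N + 2 ∉ T := fun hm => by
      have := (Finset.mem_Icc.mp (hT.1 hm)).2; omega
    ext x
    constructor
    · intro hx
      have : x ∈ insert (N + 2) T := hST ▸ Finset.mem_insert_of_mem hx
      rcases Finset.mem_insert.mp this with rfl | h
      · exact absurd hx hSn
      · exact h
    · intro hx
      have : x ∈ insert (N + 2) S := hST ▸ Finset.mem_insert_of_mem hx
      rcases Finset.mem_insert.mp this with rfl | h
      · exact absurd hx hTn
      · exact h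
  · rw [Finset.disjoint_left]
    rintro S hS hS'
    rw [Finset.mem_image] at hS
    obtain ⟨T, _, rfl⟩ := hS
    rw [hmem] at hS'
    have : N + 2 ∈ insert (N + 2) T := Finset.mem_insert_self _ _
    have := (Finset.mem_Icc.mp (hS'.1 this)).2
    omega

open Classical in
lemma numFibSets_zero : numFibSets 0 = 1 := by
  classical
  unfold numFibSets
  have : Finset.Icc 1 0 = (∅ : Finset ℕ) := by simp
  rw [this]
  rw [show ((∅ : Finset ℕ).powerset) = {∅} by simp]
  rw [Finset.filter_singleton]
  rw [if_pos]
  · simp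
  · exact ⟨by simp, by simp, by simp⟩

open Classical in
lemma numFibSets_one : numFibSets 1 = 1 := by
  classical
  unfold numFibSets
  have h1 : Finset.Icc 1 1 = ({1} : Finset ℕ) := by simp
  rw [h1, show ({1} : Finset ℕ).powerset = {∅, {1}} from rfl]
  have : ({∅, {1}} : Finset (Finset ℕ)).filter (IsFibSet 1) = {{1}} := by
    ext S
    simp only [Finset.mem_filter, Finset.mem_insert, Finset.mem_singleton]
    constructor
    · rintro ⟨rfl | rfl, h⟩
      · exfalso; obtain ⟨_, h2, _⟩ := h; simp at h2
      · rfl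
    · rintro rfl
      refine ⟨Or.inr rfl, by simp, by simp, ?_⟩
      intro i hi
      simp only [Finset.card_singleton] at hi
      interval_cases i
      simp
  rw [this]
  simp

lemma numFibSets_eq_fib (N : ℕ) : numFibSets N = Nat.fib (N + 1) := by
  induction N using Nat.strong_induction_on with
  | _ N ih =>
    match N with
    | 0 => simpa using numFibSets_zero
    | 1 => simpa using numFibSets_one
    | (n + 2) =>
      rw [numFibSets_rec, ih (n + 1) (by omega), ih n (by omega)]
      have h1 : Nat.fib (n + 1 + 2) = Nat.fib (n + 1) + Nat.fib (n + 1 + 1) :=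
        Nat.fib_add_two
      have h2 : Nat.fib (n + 1 + 1) = Nat.fib n + Nat.fib (n + 1) := Nat.fib_add_two
      have h3 : Nat.fib (n + 2 + 1) = Nat.fib (n + 1 + 2) := rfl
      omega

/-- The number of Fibonacci sets of rank `N` is the Fibonacci number `F (N+1)`
(with `F 1 = F 2 = 1`, i.e. `Nat.fib`); in particular `|YFS_0| = |YFS_1| = 1` and
the counts satisfy the Fibonacci recurrence. -/
theorem card_fibSets (N : ℕ) :
    numFibSets N = Nat.fib (N + 1) ∧ numFibSets 0 = 1 ∧ numFibSets 1 = 1 ∧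
      (2 ≤ N → numFibSets N = numFibSets (N - 1) + numFibSets (N - 2)) := by
  refine ⟨numFibSets_eq_fib N, numFibSets_zero, numFibSets_one, ?_⟩
  intro hN
  obtain ⟨n, rfl⟩ : ∃ n, N = n + 2 := ⟨N - 2, by omega⟩
  simpa using numFibSets_rec n
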